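/- Let Λ be the even unimodular K3 lattice −E₈ ⊕ −E₈ ⊕ H ⊕ H ⊕ H (signature (3,19)), M = [[2a, b],[b, 2d]] a symmetric integer matrix, and λ₁ ∈ Λ a primitive element with (λ₁,λ₁) = 2a. Then there exists a primitive rank-2 sublattice Σ ⊂ Λ containing λ₁ and an element λ₂ ∈ Σ such that {λ₁, λ₂} is a basis of Σ whose Gram matrix is M. -/

import Mathlib

/-- Gram matrix of the even rank-2 hyperbolic lattice `H`. -/
def Hgram : Matrix (Fin 2) (Fin 2) ℤ := !![0, 1; 1, 0]

/-- Index type for the K3 lattice `−E₈ ⊕ −E₈ ⊕ H ⊕ H ⊕ H`. -/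
abbrev K3Index : Type := (Fin 8 ⊕ Fin 8) ⊕ ((Fin 2 ⊕ Fin 2) ⊕ Fin 2)

/-- Gram matrix of the K3 lattice `−E₈ ⊕ −E₈ ⊕ H ⊕ H ⊕ H`
(the Gram matrix of `E₈` in a root basis is its Cartan matrix). -/
def K3Gram : Matrix K3Index K3Index ℤ :=
  Matrix.fromBlocks
    (Matrix.fromBlocks (-CartanMatrix.E₈) 0 0 (-CartanMatrix.E₈)) 0 0
    (Matrix.fromBlocks (Matrix.fromBlocks Hgram 0 0 Hgram) 0 0 Hgram)

/-- The K3 lattice as a free `ℤ`-module. -/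
abbrev K3Lattice : Type := K3Index → ℤ

/-- The bilinear form of the K3 lattice. -/
def K3Form (x y : K3Lattice) : ℤ := dotProduct x (K3Gram.mulVec y)

/-! ### Auxiliary matrix facts -/

/-- Inverse of the `E₈` Cartan matrix (it has determinant 1). -/
def E8inv : Matrix (Fin 8) (Fin 8) ℤ :=
  !![4, 5, 7, 10, 8, 6, 4, 2;
     5, 8, 10, 15, 12, 9, 6, 3;
     7, 10, 14, 20, 16, 12, 8, 4;
     10, 15, 20, 30, 24, 18, 12, 6;
     8, 12, 16, 24, 20, 15, 10, 5;
     6, 9, 12, 18, 15, 12, 8, 4;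
     4, 6, 8, 12, 10, 8, 6, 3;
     2, 3, 4, 6, 5, 4, 3, 2]

/-- Integral inverse of the K3 Gram matrix. -/
def K3GramInv : Matrix K3Index K3Index ℤ :=
  Matrix.fromBlocks
    (Matrix.fromBlocks (-E8inv) 0 0 (-E8inv)) 0 0
    (Matrix.fromBlocks (Matrix.fromBlocks Hgram 0 0 Hgram) 0 0 Hgram)

lemma e8inv_mul : E8inv * CartanMatrix.E₈ = 1 := by decide

lemma hgram_mul : Hgram * Hgram = 1 := by decide

lemma k3inv_mul : K3GramInv * K3Gram = 1 := by
  rw [K3GramInv, K3Gram, Matrix.fromBlocks_multiply, Matrix.fromBlocks_multiply,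
    Matrix.fromBlocks_multiply]
  simp [Matrix.neg_mul, Matrix.mul_neg, e8inv_mul, hgram_mul, Matrix.fromBlocks_one,
    Matrix.fromBlocks_multiply]

lemma k3gram_symm : ∀ i j, K3Gram i j = K3Gram j i := by
  exact @of_decide_eq_true _ (@Fintype.decidableForallFintype _ _ (fun i => Fintype.decidableForallFintype) _) rfl

lemma k3gram_transpose : K3Gram.transpose = K3Gram := by
  ext i j; exact k3gram_symm j i

lemma k3gram_diag_even : ∀ i, K3Gram i i % 2 = 0 := by decide

/-! ### Bilinearity of the form -/

lemma K3Form_add_left (x y z : K3Lattice) :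
    K3Form (x + y) z = K3Form x z + K3Form y z := add_dotProduct _ _ _

lemma K3Form_smul_left (c : ℤ) (x y : K3Lattice) :
    K3Form (c • x) y = c * K3Form x y := by
  simpa [K3Form] using smul_dotProduct c x (K3Gram.mulVec y)

lemma K3Form_add_right (x y z : K3Lattice) :
    K3Form x (y + z) = K3Form x y + K3Form x z := by
  simp [K3Form, Matrix.mulVec_add, dotProduct_add]

lemma K3Form_smul_right (c : ℤ) (x y : K3Lattice) :
    K3Form x (c • y) = c * K3Form x y := by
  rw [K3Form, K3Form, Matrix.mulVec_smul, dotProduct_smul, smul_eq_mul]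

lemma K3Form_sub_left (x y z : K3Lattice) :
    K3Form (x - y) z = K3Form x z - K3Form y z := sub_dotProduct _ _ _

lemma K3Form_zero_left (y : K3Lattice) : K3Form 0 y = 0 := zero_dotProduct _

lemma K3Form_comm (x y : K3Lattice) : K3Form x y = K3Form y x := by
  rw [K3Form, Matrix.dotProduct_mulVec, ← k3gram_transpose, Matrix.vecMul_transpose,
    dotProduct_comm, K3Form]

/-! ### Evenness -/

lemma K3Form_even (x : K3Lattice) : 2 ∣ K3Form x x := by
  have hform : K3Form x x = ∑ i : K3Index, ∑ j : K3Index, x i * K3Gram i j * x j := by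
    unfold K3Form dotProduct Matrix.mulVec dotProduct
    refine Finset.sum_congr rfl fun i _ => ?_
    rw [Finset.mul_sum]
    exact Finset.sum_congr rfl fun j _ => by ring
  suffices hc : ((K3Form x x : ℤ) : ZMod 2) = 0 by
    exact_mod_cast (ZMod.intCast_zmod_eq_zero_iff_dvd _ 2).mp hc
  push_cast [hform]
  rw [← Finset.sum_product']
  rw [← Finset.sum_filter_add_sum_filter_not (Finset.univ ×ˢ Finset.univ)
      (fun p : K3Index × K3Index => p.1 = p.2)]
  have hdiag : ∑ p ∈ (Finset.univ ×ˢ Finset.univ).filter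
      (fun p : K3Index × K3Index => p.1 = p.2),
      ((x p.1 : ZMod 2) * (K3Gram p.1 p.2 : ZMod 2) * (x p.2 : ZMod 2)) = 0 := by
    refine Finset.sum_eq_zero fun p hp => ?_
    have h : p.1 = p.2 := (Finset.mem_filter.mp hp).2
    have h2 : ((K3Gram p.1 p.2 : ℤ) : ZMod 2) = 0 := by
      rw [ZMod.intCast_zmod_eq_zero_iff_dvd]
      exact Int.dvd_of_emod_eq_zero (by rw [h]; exact k3gram_diag_even p.2)
    rw [h2, mul_zero, zero_mul]
  have hoff : ∑ p ∈ (Finset.univ ×ˢ Finset.univ).filter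
      (fun p : K3Index × K3Index => ¬p.1 = p.2),
      ((x p.1 : ZMod 2) * (K3Gram p.1 p.2 : ZMod 2) * (x p.2 : ZMod 2)) = 0 := by
    apply Finset.sum_involution (fun p _ => (p.2, p.1))
    · intro p _
      have : ((x p.2 : ZMod 2) * (K3Gram p.2 p.1 : ZMod 2) * (x p.1 : ZMod 2)) =
          ((x p.1 : ZMod 2) * (K3Gram p.1 p.2 : ZMod 2) * (x p.2 : ZMod 2)) := by
        rw [k3gram_symm p.2 p.1]; ring
      rw [this]
      have h2 : (2 : ZMod 2) = 0 := by decide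
      rw [← two_mul, h2, zero_mul]
    · intro p hp _ hswap
      have h1 : p.2 = p.1 := congrArg Prod.fst hswap
      exact (Finset.mem_filter.mp hp).2 h1.symm
    · intro p hp
      simp only [Finset.mem_filter, Finset.mem_product, Finset.mem_univ, true_and] at hp ⊢
      exact fun h => hp (h.symm)
    · intro p _; rfl
  rw [hdiag, hoff, add_zero]

/-! ### Bezout-type lemma -/

lemma exists_dot_eq_one (v : K3Index → ℤ)
    (hv : ∀ k : ℤ, (∀ i, k ∣ v i) → IsUnit k) :
    ∃ w : K3Index → ℤ, dotProduct v w = 1 := by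
  obtain ⟨g, hg⟩ := (IsPrincipalIdealRing.principal
    (Ideal.span (Set.range v) : Ideal ℤ)).principal
  have hdvd : ∀ i, g ∣ v i := by
    intro i
    have hmem : v i ∈ Ideal.span (Set.range v) := Ideal.subset_span ⟨i, rfl⟩
    rw [hg] at hmem
    exact Ideal.mem_span_singleton.mp hmem
  have hone : (1 : ℤ) ∈ Ideal.span (Set.range v) := by
    have htop : (Ideal.span {g} : Ideal ℤ) = ⊤ :=
      Ideal.span_singleton_eq_top.mpr (hv g hdvd)
    rw [hg]
    rw [show (Submodule.span ℤ {g} : Ideal ℤ) = ⊤ from htop]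
    trivial
  rw [Ideal.span, Submodule.mem_span_range_iff_exists_fun] at hone
  obtain ⟨c, hc⟩ := hone
  exact ⟨c, by simpa [dotProduct, mul_comm] using hc⟩

/-- From primitivity of `x` deduce primitivity of `K3Gram *ᵥ x` using the integral inverse. -/
lemma prim_mulVec (x : K3Lattice) (hx : ∀ k : ℤ, (∀ i, k ∣ x i) → IsUnit k) :
    ∀ k : ℤ, (∀ i, k ∣ (K3Gram.mulVec x) i) → IsUnit k := by
  intro k hk
  apply hx
  intro i
  have hxi : x = K3GramInv.mulVec (K3Gram.mulVec x) := by
    rw [Matrix.mulVec_mulVec, k3inv_mul, Matrix.one_mulVec]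
  rw [hxi]
  simp only [Matrix.mulVec, dotProduct]
  exact Finset.dvd_sum fun j _ => Dvd.dvd.mul_left (hk j) _

/-- A primitive `x` pairs to 1 with some vector. -/
lemma exists_pairing_one (x : K3Lattice) (hx : ∀ k : ℤ, (∀ i, k ∣ x i) → IsUnit k) :
    ∃ w : K3Lattice, K3Form x w = 1 := by
  obtain ⟨w, hw⟩ := exists_dot_eq_one (K3Gram.mulVec x) (prim_mulVec x hx)
  refine ⟨w, ?_⟩
  rw [K3Form, Matrix.dotProduct_mulVec, ← k3gram_transpose, Matrix.vecMul_transpose]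
  exact hw

/-! ### The hyperbolic slots -/

def pslot : Fin 3 → K3Index :=
  ![Sum.inr (Sum.inl (Sum.inl 0)), Sum.inr (Sum.inl (Sum.inr 0)), Sum.inr (Sum.inr 0)]

def qslot : Fin 3 → K3Index :=
  ![Sum.inr (Sum.inl (Sum.inl 1)), Sum.inr (Sum.inl (Sum.inr 1)), Sum.inr (Sum.inr 1)]

/-- The vector supported on the `p`-slots of the three hyperbolic planes. -/
def pvec (r : Fin 3 → ℤ) : K3Lattice :=
  r 0 • Pi.single (pslot 0) 1 + r 1 • Pi.single (pslot 1) 1 + r 2 • Pi.single (pslot 2) 1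

lemma k3gram_col (k : Fin 3) :
    K3Gram.mulVec (Pi.single (pslot k) 1) = Pi.single (qslot k) 1 := by
  rw [Matrix.mulVec_single]
  funext i
  fin_cases k <;>
    simp only [pslot, qslot, Matrix.cons_val_zero, Matrix.cons_val_one, Matrix.head_cons,
      Matrix.cons_val_two, Matrix.tail_cons, mul_one, Pi.single_apply] <;>
    revert i <;> decide

lemma form_pvec (x : K3Lattice) (r : Fin 3 → ℤ) :
    K3Form x (pvec r) =
      r 0 * x (qslot 0) + r 1 * x (qslot 1) + r 2 * x (qslot 2) := by
  rw [K3Form, pvec]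
  rw [Matrix.mulVec_add, Matrix.mulVec_add, Matrix.mulVec_smul, Matrix.mulVec_smul,
    Matrix.mulVec_smul, k3gram_col, k3gram_col, k3gram_col,
    dotProduct_add, dotProduct_add, dotProduct_smul,
    dotProduct_smul, dotProduct_smul, dotProduct_single,
    dotProduct_single, dotProduct_single]
  simp [mul_comm]

lemma pvec_pslot (r : Fin 3 → ℤ) (k : Fin 3) : pvec r (pslot k) = r k := by
  fin_cases k <;>
    simp [pvec, pslot, Pi.single_apply]

lemma pvec_qslot (r : Fin 3 → ℤ) (k : Fin 3) : pvec r (qslot k) = 0 := by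
  fin_cases k <;> simp [pvec, pslot, qslot, Pi.single_apply]

/-! ### A primitive kernel vector in `ℤ³` -/

private def dot3 (r u : Fin 3 → ℤ) : ℤ := r 0 * u 0 + r 1 * u 1 + r 2 * u 2

/-- Normalizing a nonzero kernel vector by its gcd. -/
lemma normalize_kernel (u v r₀ : Fin 3 → ℤ) (h : r₀ ≠ 0)
    (h1 : dot3 r₀ u = 0) (h2 : dot3 r₀ v = 0) :
    ∃ r : Fin 3 → ℤ, dot3 r u = 0 ∧ dot3 r v = 0 ∧
      ∀ t : ℤ, (∀ k, t ∣ r k) → IsUnit t := by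
  set g : ℤ := Finset.gcd Finset.univ r₀ with hgdef
  have hdvd : ∀ k, g ∣ r₀ k := fun k => Finset.gcd_dvd (Finset.mem_univ k)
  have hgne : g ≠ 0 := by
    intro h0
    apply h
    funext k
    have := (Finset.gcd_eq_zero_iff.mp (hgdef ▸ h0)) k (Finset.mem_univ k)
    simpa using this
  refine ⟨fun k => r₀ k / g, ?_, ?_, ?_⟩
  · apply mul_left_cancel₀ hgne
    rw [mul_zero, ← h1]
    simp only [dot3, mul_add]
    rw [← mul_assoc, ← mul_assoc, ← mul_assoc,
      Int.mul_ediv_cancel' (hdvd 0), Int.mul_ediv_cancel' (hdvd 1),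
      Int.mul_ediv_cancel' (hdvd 2)]
  · apply mul_left_cancel₀ hgne
    rw [mul_zero, ← h2]
    simp only [dot3, mul_add]
    rw [← mul_assoc, ← mul_assoc, ← mul_assoc,
      Int.mul_ediv_cancel' (hdvd 0), Int.mul_ediv_cancel' (hdvd 1),
      Int.mul_ediv_cancel' (hdvd 2)]
  · intro t ht
    have htg : ∀ k, t * g ∣ r₀ k := by
      intro k
      obtain ⟨c, hc⟩ := ht k
      refine ⟨c, ?_⟩
      have hck : r₀ k / g = t * c := hc
      rw [← Int.mul_ediv_cancel' (hdvd k), hck]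
      ring
    have : t * g ∣ g := Finset.dvd_gcd fun k _ => htg k
    obtain ⟨c, hc⟩ := this
    have : g * 1 = g * (t * c) := by rw [mul_one]; nth_rewrite 1 [hc]; ring
    exact IsUnit.of_mul_eq_one (a := t) c (mul_left_cancel₀ hgne this).symm

lemma exists_primitive_kernel (u v : Fin 3 → ℤ) :
    ∃ r : Fin 3 → ℤ, dot3 r u = 0 ∧ dot3 r v = 0 ∧
      ∀ t : ℤ, (∀ k, t ∣ r k) → IsUnit t := by
  by_cases hc : u 0 * v 1 - u 1 * v 0 = 0
  · by_cases h01 : u 0 = 0 ∧ u 1 = 0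
    · by_cases h2 : u 2 = 0
      · -- u = 0
        by_cases hv01 : v 0 = 0 ∧ v 1 = 0
        · refine normalize_kernel u v ![1, 0, 0] ?_ ?_ ?_
          · intro h0
            have := congrFun h0 0
            simp at this
          · simp [dot3, h01.1]
          · simp [dot3, hv01.1]
        · refine normalize_kernel u v ![v 1, -(v 0), 0] ?_ ?_ ?_
          · intro h0
            apply hv01
            constructor
            · have := congrFun h0 1; simpa using this
            · have := congrFun h0 0; simpa using this
          · simp [dot3, h01.1, h01.2, h2]
          · simp [dot3]; ring
      · -- u 0 = u 1 = 0, u 2 ≠ 0; then v 0 and v 1 satisfy: from cross components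
        -- u 1 * v 2 - u 2 * v 1 = 0 and u 2 * v 0 - u 0 * v 2 = 0 are needed...
        by_cases hc1 : u 2 * v 0 - u 0 * v 2 = 0
        · by_cases hc2 : u 1 * v 2 - u 2 * v 1 = 0
          · -- v 0 = 0 and v 1 = 0 follow
            have hv0 : v 0 = 0 := by
              have : u 2 * v 0 = 0 := by rw [h01.1] at hc1; linarith
              exact (mul_eq_zero.mp this).resolve_left h2
            have hv1 : v 1 = 0 := by
              have : u 2 * v 1 = 0 := by rw [h01.2] at hc2; linarith
              exact (mul_eq_zero.mp this).resolve_left h2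
            refine normalize_kernel u v ![1, 0, 0] ?_ ?_ ?_
            · intro h0; have := congrFun h0 0; simp at this
            · simp [dot3, h01.1]
            · simp [dot3, hv0]
          · -- cross ≠ 0 in component 0 : use full cross product
            refine normalize_kernel u v
              ![u 1 * v 2 - u 2 * v 1, u 2 * v 0 - u 0 * v 2, u 0 * v 1 - u 1 * v 0] ?_ ?_ ?_
            · intro h0; have := congrFun h0 0; simp at this; exact hc2 (by linarith)
            · simp [dot3]; ring
            · simp [dot3]; ring
        · refine normalize_kernel u v
            ![u 1 * v 2 - u 2 * v 1, u 2 * v 0 - u 0 * v 2, u 0 * v 1 - u 1 * v 0] ?_ ?_ ?_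
          · intro h0; have := congrFun h0 1; simp at this; exact hc1 (by linarith)
          · simp [dot3]; ring
          · simp [dot3]; ring
    · -- (u 0, u 1) ≠ 0 : use r₀ = (u 1, -u 0, 0), works since u0 v1 - u1 v0 = 0
      refine normalize_kernel u v ![u 1, -(u 0), 0] ?_ ?_ ?_
      · intro h0
        apply h01
        constructor
        · have := congrFun h0 1; simpa using this
        · have := congrFun h0 0; simpa using this
      · simp [dot3]; ring
      · simp [dot3]; linarith [hc]
  · refine normalize_kernel u v
      ![u 1 * v 2 - u 2 * v 1, u 2 * v 0 - u 0 * v 2, u 0 * v 1 - u 1 * v 0] ?_ ?_ ?_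
    · intro h0; have := congrFun h0 2; simp at this; exact hc (by linarith)
    · simp [dot3]; ring
    · simp [dot3]; ring

lemma K3Form_sub_right (x y z : K3Lattice) :
    K3Form x (y - z) = K3Form x y - K3Form x z := by
  have := K3Form_add_right x z (y - z)
  rw [add_sub_cancel] at this
  rw [this]; ring

theorem k3_rank_two_primitive_sublattice
    (a b d : ℤ) (l₁ : K3Lattice)
    (hprim : ∀ (n : ℤ) (c : K3Lattice), l₁ = n • c → IsUnit n)
    (h₁ : K3Form l₁ l₁ = 2 * a) :
    ∃ l₂ : K3Lattice,
      LinearIndependent ℤ ![l₁, l₂]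
      ∧ K3Form l₁ l₂ = b
      ∧ K3Form l₂ l₂ = 2 * d
      ∧ (∀ (n : ℤ) (x : K3Lattice), n ≠ 0 →
          n • x ∈ Submodule.span ℤ ({l₁, l₂} : Set K3Lattice) →
          x ∈ Submodule.span ℤ ({l₁, l₂} : Set K3Lattice)) := by
  classical
  -- primitivity of l₁ in divisor form
  have hprim' : ∀ k : ℤ, (∀ i, k ∣ l₁ i) → IsUnit k := by
    intro k hk
    refine hprim k (fun i => l₁ i / k) ?_
    funext i
    simp only [Pi.smul_apply, smul_eq_mul]
    exact (Int.mul_ediv_cancel' (hk i)).symm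
  -- a dual vector for l₁
  obtain ⟨w, hw⟩ := exists_pairing_one l₁ hprim'
  -- a primitive isotropic vector orthogonal to l₁ and w
  obtain ⟨r, hru, hrv, hrprim⟩ := exists_primitive_kernel
      (fun k => l₁ (qslot k)) (fun k => w (qslot k))
  set f : K3Lattice := pvec r with hfdef
  have hl1f : K3Form l₁ f = 0 := by
    rw [hfdef, form_pvec]; simpa [dot3] using hru
  have hwf : K3Form w f = 0 := by
    rw [hfdef, form_pvec]; simpa [dot3] using hrv
  have hff : K3Form f f = 0 := by
    rw [hfdef, form_pvec, pvec_qslot, pvec_qslot, pvec_qslot]; ring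
  have hfprim : ∀ k : ℤ, (∀ i, k ∣ f i) → IsUnit k := by
    intro k hk
    refine hrprim k fun j => ?_
    have := hk (pslot j)
    rwa [hfdef, pvec_pslot] at this
  -- a dual vector for f, corrected to be orthogonal to l₁
  obtain ⟨e₀, he₀⟩ := exists_pairing_one f hfprim
  set e : K3Lattice := e₀ - (K3Form l₁ e₀) • w with hedef
  have hl1e : K3Form l₁ e = 0 := by
    rw [hedef, K3Form_sub_right, K3Form_smul_right, hw]; ring
  have hfe : K3Form f e = 1 := by
    rw [hedef, K3Form_sub_right, K3Form_smul_right, he₀, K3Form_comm f w, hwf]; ring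
  have hef : K3Form e f = 1 := by rw [K3Form_comm]; exact hfe
  have hfw : K3Form f w = 0 := by rw [K3Form_comm]; exact hwf
  -- even self-intersections
  obtain ⟨ω, hww⟩ := K3Form_even w
  obtain ⟨ε, hee⟩ := K3Form_even e
  set c := K3Form w e with hcdef
  have hew : K3Form e w = c := by rw [K3Form_comm, ← hcdef]
  set m : ℤ := d - b * b * ω - b * c - ε with hmdef
  set l₂ : K3Lattice := b • w + e + m • f with hl2def
  have hl1l2 : K3Form l₁ l₂ = b := by
    rw [hl2def, K3Form_add_right, K3Form_add_right, K3Form_smul_right,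
      K3Form_smul_right, hw, hl1f, hl1e]; ring
  have hl2f : K3Form l₂ f = 1 := by
    rw [hl2def, K3Form_add_left, K3Form_add_left, K3Form_smul_left,
      K3Form_smul_left, hwf, hef, hff]; ring
  have hl2l2 : K3Form l₂ l₂ = 2 * d := by
    rw [hl2def]
    simp only [K3Form_add_left, K3Form_add_right, K3Form_smul_left, K3Form_smul_right]
    rw [hww, hee, hwf, hfw, hef, hfe, hff, hew, ← hcdef, hmdef]
    ring
  refine ⟨l₂, ?_, hl1l2, hl2l2, ?_⟩
  · rw [LinearIndependent.pair_iff]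
    intro s t hst
    have h1 := congrArg (fun y => K3Form y f) hst
    simp only [K3Form_add_left, K3Form_smul_left, K3Form_zero_left, hl1f, hl2f] at h1
    have ht : t = 0 := by linarith [h1]
    have h2 := congrArg (fun y => K3Form y w) hst
    simp only [K3Form_add_left, K3Form_smul_left, K3Form_zero_left, hw] at h2
    rw [ht] at h2
    constructor
    · linarith [h2]
    · exact ht
  · intro n x hn hmem
    rw [Submodule.mem_span_pair] at hmem ⊢
    obtain ⟨α, β, hαβ⟩ := hmem
    have hβ : β = n * K3Form x f := by
      have h1 := congrArg (fun y => K3Form y f) hαβ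
      simp only [K3Form_add_left, K3Form_smul_left, hl1f, hl2f] at h1
      linarith [h1]
    have hα : α = n * (K3Form x w - K3Form x f * K3Form l₂ w) := by
      have h2 := congrArg (fun y => K3Form y w) hαβ
      simp only [K3Form_add_left, K3Form_smul_left, hw] at h2
      rw [hβ] at h2
      linarith [h2]
    refine ⟨K3Form x w - K3Form x f * K3Form l₂ w, K3Form x f, ?_⟩
    apply smul_right_injective K3Lattice hn
    show n • ((K3Form x w - K3Form x f * K3Form l₂ w) • l₁ + K3Form x f • l₂) = n • x
    rw [smul_add, smul_smul, smul_smul, ← hα, ← hβ, hαβ]
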